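/- Let n, m ≥ 1 and let X be a real n×m matrix. Let μ₁, …, μ_{n+m} be the complex roots (with multiplicity) of the characteristic polynomial of Ω, and let λ₁, …, λ_{n+m} be the complex roots (with multiplicity) of the characteristic polynomial of M (all of which are nonzero, since det M = 1). Then the multiset {μᵢ² : 1 ≤ i ≤ n+m} equals the multiset {2 − λᵢ − λᵢ⁻¹ : 1 ≤ i ≤ n+m}. -/

import Mathlib

open Matrix Polynomial

section AuxLemmas

variable {ι : Type*} [Fintype ι] [DecidableEq ι]

lemma aux_charpoly_eval (A : Matrix ι ι ℂ) (r : ℂ) :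
    A.charpoly.eval r = (r • (1 : Matrix ι ι ℂ) - A).det := by
  rw [Matrix.charpoly, ← coe_evalRingHom, RingHom.map_det]
  congr 1
  ext i j
  by_cases h : i = j
  · subst h
    simp [charmatrix_apply_eq, Matrix.one_apply]
  · simp [charmatrix_apply_ne _ _ _ h, Matrix.one_apply_ne h]

lemma aux_charpoly_prod (A : Matrix ι ι ℂ) :
    A.charpoly = (A.charpoly.roots.map fun a => X - C a).prod :=
  (IsAlgClosed.splits _).eq_prod_roots_of_monic A.charpoly_monic

lemma aux_card_roots (A : Matrix ι ι ℂ) :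
    A.charpoly.roots.card = Fintype.card ι := by
  rw [splits_iff_card_roots.mp (IsAlgClosed.splits _),
    Matrix.charpoly_natDegree_eq_dim]

lemma aux_eval_prod_XsubC (s : Multiset ℂ) (t : ℂ) :
    ((s.map fun a => X - C a).prod).eval t = (s.map fun a => t - a).prod := by
  rw [eval_multiset_prod, Multiset.map_map]
  simp [Function.comp]

lemma aux_eval_charpoly (A : Matrix ι ι ℂ) (t : ℂ) :
    A.charpoly.eval t = (A.charpoly.roots.map fun a => t - a).prod := by
  conv_lhs => rw [aux_charpoly_prod A]
  exact aux_eval_prod_XsubC _ _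

lemma aux_prod_neg_shift (s : Multiset ℂ) (t : ℂ) :
    (s.map fun a => -t - a).prod = (-1) ^ s.card * (s.map fun a => t + a).prod := by
  have h : (s.map fun a => -t - a) = s.map fun a => (-1) * (t + a) :=
    Multiset.map_congr rfl (fun a _ => by ring)
  rw [h]
  rw [show (fun a => (-1 : ℂ) * (t + a)) = fun a => (fun _ => (-1 : ℂ)) a * (fun b => t + b) a
    from rfl, Multiset.prod_map_mul]
  congr 1
  simp [Multiset.map_const']

lemma aux_det_add (A : Matrix ι ι ℂ) (t : ℂ) :
    (t • (1 : Matrix ι ι ℂ) + A).det = (A.charpoly.roots.map fun a => t + a).prod := by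
  have h : t • (1 : Matrix ι ι ℂ) + A = -((-t) • 1 - A) := by
    rw [neg_sub, neg_smul]
    abel
  rw [h, Matrix.det_neg, ← aux_charpoly_eval, aux_eval_charpoly, aux_prod_neg_shift,
    aux_card_roots, ← mul_assoc, ← pow_add]
  rw [Even.neg_one_pow ⟨Fintype.card ι, rfl⟩, one_mul]

lemma aux_roots_sq (A : Matrix ι ι ℂ) :
    (A * A).charpoly.roots = A.charpoly.roots.map (fun μ => μ ^ 2) := by
  have key : (A * A).charpoly = ((A.charpoly.roots.map fun μ => μ ^ 2).map
      fun a => X - C a).prod := by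
    apply Polynomial.funext
    intro s
    obtain ⟨t, ht⟩ := IsAlgClosed.exists_pow_nat_eq s (k := ℂ) (n := 2) two_pos
    have hfact : s • (1 : Matrix ι ι ℂ) - A * A = (t • 1 - A) * (t • 1 + A) := by
      rw [sub_mul, mul_add, mul_add, smul_mul_assoc, one_mul, smul_mul_assoc, one_mul,
        mul_smul_comm, mul_one, smul_smul, ← ht, pow_two]
      abel
    rw [aux_charpoly_eval, hfact, Matrix.det_mul, ← aux_charpoly_eval, aux_eval_charpoly,
      aux_det_add, ← Multiset.prod_map_mul, aux_eval_prod_XsubC, Multiset.map_map]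
    congr 1
    apply Multiset.map_congr rfl
    intro a _
    simp only [Function.comp]
    rw [← ht]
    ring
  rw [key, roots_multiset_prod_X_sub_C]

lemma aux_eval_zero (A : Matrix ι ι ℂ) :
    A.charpoly.eval 0 = (-1) ^ Fintype.card ι * A.det := by
  rw [aux_charpoly_eval, zero_smul, zero_sub, Matrix.det_neg]

lemma aux_roots_ne_zero (A : Matrix ι ι ℂ) (hdet : A.det = 1) :
    ∀ l ∈ A.charpoly.roots, l ≠ 0 := by
  intro l hl h0
  subst h0
  have h1 : A.charpoly.eval 0 = 0 := (Polynomial.isRoot_of_mem_roots hl)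
  rw [aux_eval_zero, hdet, mul_one] at h1
  exact (by simp : ((-1 : ℂ)) ^ Fintype.card ι ≠ 0) h1

lemma aux_prod_roots (A : Matrix ι ι ℂ) (hdet : A.det = 1) :
    A.charpoly.roots.prod = 1 := by
  have h := aux_eval_charpoly A 0
  rw [aux_eval_zero, hdet, mul_one] at h
  have h2 : (A.charpoly.roots.map fun a => (0 : ℂ) - a)
      = A.charpoly.roots.map fun a => (-1) * a :=
    Multiset.map_congr rfl (fun a _ => by ring)
  rw [h2, show (fun a => (-1 : ℂ) * a) = fun a => (fun _ => (-1 : ℂ)) a * id a from rfl,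
    Multiset.prod_map_mul] at h
  simp only [Multiset.map_const', Multiset.prod_replicate, Multiset.map_id, aux_card_roots] at h
  have hne : ((-1 : ℂ)) ^ Fintype.card ι ≠ 0 := by simp
  field_simp at h
  exact h.symm

lemma aux_roots_two_sub (Mm B K : Matrix ι ι ℂ) (hMB : Mm * B = 1) (hdet : Mm.det = 1)
    (hK : K + Mm + B = (2 : ℂ) • 1) :
    K.charpoly.roots = Mm.charpoly.roots.map (fun l => 2 - l - l⁻¹) := by
  have hne := aux_roots_ne_zero Mm hdet
  have key : K.charpoly = ((Mm.charpoly.roots.map fun l => 2 - l - l⁻¹).map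
      fun a => X - C a).prod := by
    apply Polynomial.funext
    intro s
    obtain ⟨w, hw⟩ := IsAlgClosed.exists_pow_nat_eq ((s - 2) ^ 2 - 4) (k := ℂ) (n := 2) two_pos
    obtain ⟨z, hz⟩ : ∃ z : ℂ, z ^ 2 - (2 - s) * z + 1 = 0 :=
      ⟨(2 - s + w) / 2, by linear_combination (1/4 : ℂ) * hw⟩
    have hz0 : z ≠ 0 := by
      intro h; rw [h] at hz; norm_num at hz
    have hzz : z + z⁻¹ = 2 - s := by
      field_simp
      linear_combination hz
    have hKs : s • (1 : Matrix ι ι ℂ) - K = (s - 2) • 1 + Mm + B := by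
      have hKe : K = (2 : ℂ) • 1 - Mm - B := by rw [← hK]; abel
      rw [hKe, sub_smul]; abel
    have hmul : Mm * ((s - 2) • 1 + Mm + B) = Mm * Mm + (s - 2) • Mm + 1 := by
      rw [mul_add, mul_add, mul_smul_comm, mul_one, hMB]
      abel
    have hexp : (Mm - z • 1) * (Mm - z⁻¹ • 1)
        = Mm * Mm - z⁻¹ • Mm - z • Mm + (z * z⁻¹) • (1 : Matrix ι ι ℂ) := by
      rw [sub_mul, mul_sub, mul_sub, mul_smul_comm, mul_one, smul_mul_assoc, one_mul,
        smul_mul_assoc, one_mul, smul_smul]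
      abel
    have hfact : Mm * Mm + (s - 2) • Mm + 1 = (Mm - z • 1) * (Mm - z⁻¹ • 1) := by
      rw [hexp, mul_inv_cancel₀ hz0, one_smul]
      have hs : (s - 2 : ℂ) = -z⁻¹ - z := by linear_combination hzz
      rw [hs, sub_smul, neg_smul]
      abel
    have hdetneg : ∀ (c : ℂ), (Mm - c • 1).det
        = (-1) ^ (Fintype.card ι) * (Mm.charpoly.roots.map fun a => c - a).prod := by
      intro c
      rw [show Mm - c • 1 = -(c • (1 : Matrix ι ι ℂ) - Mm) from (neg_sub _ _).symm,
        Matrix.det_neg, ← aux_charpoly_eval, aux_eval_charpoly]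
    calc (K.charpoly).eval s = (s • 1 - K).det := aux_charpoly_eval K s
      _ = Mm.det * ((s - 2) • 1 + Mm + B).det := by rw [hKs, hdet, one_mul]
      _ = ((Mm - z • 1) * (Mm - z⁻¹ • 1)).det := by rw [← Matrix.det_mul, hmul, hfact]
      _ = ((-1) ^ (Fintype.card ι) * (Mm.charpoly.roots.map fun a => z - a).prod)
          * ((-1) ^ (Fintype.card ι) * (Mm.charpoly.roots.map fun a => z⁻¹ - a).prod) := by
          rw [Matrix.det_mul, hdetneg, hdetneg]
      _ = (Mm.charpoly.roots.map fun a => z - a).prod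
          * (Mm.charpoly.roots.map fun a => z⁻¹ - a).prod := by
          rw [mul_mul_mul_comm, ← pow_add, Even.neg_one_pow ⟨Fintype.card ι, rfl⟩, one_mul]
      _ = (Mm.charpoly.roots.map fun a => (z - a) * (z⁻¹ - a)).prod :=
          (Multiset.prod_map_mul).symm
      _ = (Mm.charpoly.roots.map fun a => a * (s - (2 - a - a⁻¹))).prod := by
          apply congrArg
          apply Multiset.map_congr rfl
          intro a ha
          linear_combination (-a) * hzz + mul_inv_cancel₀ hz0 - mul_inv_cancel₀ (hne a ha)
      _ = Mm.charpoly.roots.prod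
          * (Mm.charpoly.roots.map fun a => s - (2 - a - a⁻¹)).prod := by
          rw [show (fun a => a * (s - (2 - a - a⁻¹)))
              = fun a => id a * (fun b => s - (2 - b - b⁻¹)) a from rfl,
            Multiset.prod_map_mul, Multiset.map_id]
      _ = (Mm.charpoly.roots.map fun a => s - (2 - a - a⁻¹)).prod := by
          rw [aux_prod_roots Mm hdet, one_mul]
      _ = eval s (((Mm.charpoly.roots.map fun l => 2 - l - l⁻¹)).map fun a => X - C a).prod := by
          rw [aux_eval_prod_XsubC, Multiset.map_map]
          rfl
  rw [key, roots_multiset_prod_X_sub_C]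

end AuxLemmas

/-- For a real `n × m` matrix `X`, with `Ω = [[0, X], [Xᵀ, 0]]` and
`M = [[I, X], [0, I]] * [[I, 0], [-Xᵀ, I]]`, the complex roots (with multiplicity) of the
characteristic polynomials satisfy: all roots `λ` of `charpoly M` are nonzero, and the
multiset `{μ² : μ root of charpoly Ω}` equals the multiset
`{2 - λ - λ⁻¹ : λ root of charpoly M}`. -/
theorem eigenvalue_multiset_correspondence
    (n m : ℕ) (hn : 1 ≤ n) (hm : 1 ≤ m)
    (X : Matrix (Fin n) (Fin m) ℝ)
    (Ω M : Matrix (Fin n ⊕ Fin m) (Fin n ⊕ Fin m) ℂ)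
    (hΩ : Ω = (Matrix.fromBlocks 0 X Xᵀ 0).map (algebraMap ℝ ℂ))
    (hM : M = (Matrix.fromBlocks 1 X 0 1 * Matrix.fromBlocks 1 0 (-Xᵀ) 1).map
      (algebraMap ℝ ℂ)) :
    (∀ l ∈ M.charpoly.roots, l ≠ 0) ∧
      Ω.charpoly.roots.map (fun μ => μ ^ 2)
        = M.charpoly.roots.map (fun l => 2 - l - l⁻¹) := by
  set Y : Matrix (Fin n) (Fin m) ℂ := X.map (algebraMap ℝ ℂ) with hY
  have hmapneg : (-Xᵀ).map (algebraMap ℝ ℂ) = -(Xᵀ.map (algebraMap ℝ ℂ)) := by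
    ext i j; simp
  have hΩ' : Ω = fromBlocks 0 Y Yᵀ 0 := by
    rw [hΩ, fromBlocks_map]
    simp only [Matrix.map_zero _ (map_zero _), Matrix.transpose_map, ← hY]
  have hM' : M = fromBlocks 1 Y 0 1 * fromBlocks 1 0 (-Yᵀ) 1 := by
    rw [hM, Matrix.map_mul, fromBlocks_map, fromBlocks_map, hmapneg]
    simp only [Matrix.map_zero _ (map_zero _), Matrix.map_one _ (map_zero _) (map_one _),
      Matrix.transpose_map, ← hY]
  have hMeq : M = fromBlocks (1 - Y * Yᵀ) Y (-Yᵀ) 1 := by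
    rw [hM', fromBlocks_multiply]
    congr 1 <;> simp [Matrix.mul_neg, sub_eq_add_neg]
  have hB : M * fromBlocks 1 (-Y) Yᵀ (1 - Yᵀ * Y) = 1 := by
    rw [hMeq, fromBlocks_multiply, ← fromBlocks_one]
    simp [Matrix.sub_mul, Matrix.mul_sub, Matrix.mul_neg, Matrix.neg_mul, Matrix.mul_assoc]
  have hsum : Ω * Ω + M + fromBlocks 1 (-Y) Yᵀ (1 - Yᵀ * Y)
      = (2 : ℂ) • (1 : Matrix (Fin n ⊕ Fin m) (Fin n ⊕ Fin m) ℂ) := by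
    rw [hΩ', hMeq, fromBlocks_multiply, ← fromBlocks_one, fromBlocks_smul,
      fromBlocks_add, fromBlocks_add]
    congr 1 <;> simp [two_smul] <;> abel
  have hdet : M.det = 1 := by
    rw [hM, ← RingHom.mapMatrix_apply, ← RingHom.map_det, Matrix.det_mul,
      det_fromBlocks_zero₂₁, det_fromBlocks_zero₁₂]
    simp
  refine ⟨aux_roots_ne_zero M hdet, ?_⟩
  rw [← aux_roots_sq Ω]
  exact aux_roots_two_sub M _ (Ω * Ω) hB hdet hsum
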